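/- Let A be a commutative ring, B a commutative A-algebra, and Ψ_n : B^{⊗(n+1)} → Ω^{(n)}_{B/A} the A-linear map with Ψ_n(y₀⊗⋯⊗yₙ) = y₀ dy₁ ∧̃ ⋯ ∧̃ dyₙ. Then Ψ_n annihilates I_{ij}² for every 0 ≤ i < j ≤ n, where I_{ij} is the kernel of the map merging tensor factors i and j. -/

import Mathlib

open scoped TensorProduct
open PiTensorProduct

variable (A B : Type) [CommRing A] [CommRing B] [Algebra A B]

abbrev Bpow (n : ℕ) : Type := ⨂[A] (_ : Fin n), B

noncomputable def rmap {m n : ℕ} (r : Fin m → Fin n) : Bpow A B m →ₐ[A] Bpow A B n :=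
  PiTensorProduct.liftAlgHom
    ((MultilinearMap.mkPiAlgebra A (Fin m) (Bpow A B n)).compLinearMap
      (fun k => (PiTensorProduct.singleAlgHom (R := A) (A := fun _ : Fin n => B) (r k)).toLinearMap))
    (by simp [← PiTensorProduct.one_def])
    (by intro x y
        simp only [MultilinearMap.compLinearMap_apply, MultilinearMap.mkPiAlgebra_apply,
          Pi.mul_apply, AlgHom.toLinearMap_apply, _root_.map_mul, Finset.prod_mul_distrib])

noncomputable def mergeN (n i j : ℕ) (hij : i < j) (hj : j ≤ n) :
    Bpow A B (n+1) →ₐ[A] Bpow A B n :=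
  rmap A B (fun k => if h1 : k.val < j then ⟨k.val, by omega⟩
    else if h2 : k.val = j then ⟨i, by omega⟩
    else ⟨k.val - 1, by have := k.isLt; omega⟩)

noncomputable def Iideal (n i j : ℕ) (hij : i < j) (hj : j ≤ n) : Ideal (Bpow A B (n+1)) :=
  RingHom.ker (mergeN A B n i j hij hj)

noncomputable def Kideal (n : ℕ) : Ideal (Bpow A B (n+1)) :=
  ⨆ (i : ℕ) (j : ℕ) (hij : i < j) (hj : j ≤ n), (Iideal A B n i j hij hj) ^ 2

abbrev Cq (n : ℕ) : Type := Bpow A B (n+1) ⧸ Kideal A B n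

noncomputable def Jt (n i j : ℕ) (hij : i < j) (hj : j ≤ n) : Ideal (Cq A B n) :=
  Ideal.map (Ideal.Quotient.mk (Kideal A B n)) (Iideal A B n i j hij hj)

noncomputable def dElt (n i j : ℕ) (hi : i ≤ n) (hj : j ≤ n) (y : B) : Bpow A B (n+1) :=
  PiTensorProduct.singleAlgHom (R := A) (A := fun _ : Fin (n+1) => B) ⟨j, by omega⟩ y
    - PiTensorProduct.singleAlgHom (R := A) (A := fun _ : Fin (n+1) => B) ⟨i, by omega⟩ y

noncomputable def insN (n j : ℕ) (hj : j ≤ n+1) : Bpow A B (n+1) →ₐ[A] Bpow A B (n+2) :=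
  rmap A B (fun k => if h : k.val < j then ⟨k.val, by omega⟩
    else ⟨k.val + 1, by have := k.isLt; omega⟩)

noncomputable def eN (n : ℕ) : Bpow A B (n+1) →ₗ[A] Bpow A B (n+2) :=
  ∑ j : Fin (n+2), ((-1 : ℤ) ^ (j : ℕ)) • (insN A B n j (by omega)).toLinearMap

noncomputable def smashG (m n N : ℕ) (h : N = m + n) (x : Bpow A B (m+1)) (y : Bpow A B (n+1)) :
    Bpow A B (N+1) :=
  rmap A B (fun k : Fin (m+1) => (⟨k.val, by have := k.isLt; omega⟩ : Fin (N+1))) x *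
  rmap A B (fun k : Fin (n+1) => (⟨m + k.val, by have := k.isLt; omega⟩ : Fin (N+1))) y

/-- The submodule of relations defining the `n`-th antisymmetric power:
generated by symmetric tensors `ω⊗τ + τ⊗ω` in adjacent slots. -/
noncomputable def symSub (n : ℕ) : Submodule B (⨂[B] (_ : Fin n), Ω[B⁄A]) :=
  Submodule.span B { x | ∃ (f : Fin n → Ω[B⁄A]) (i : Fin n) (hi : i.val + 1 < n)
      (ω τ : Ω[B⁄A]),
    x = PiTensorProduct.tprod B
          (Function.update (Function.update f i ω) ⟨i.val+1, hi⟩ τ)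
      + PiTensorProduct.tprod B
          (Function.update (Function.update f i τ) ⟨i.val+1, hi⟩ ω) }

/-- The `n`-th antisymmetric power `Ω^{(n)}_{B/A}` of the Kähler differentials. -/
abbrev ASym (n : ℕ) : Type := (⨂[B] (_ : Fin n), Ω[B⁄A]) ⧸ symSub A B n



open scoped Pointwise

namespace Statement10Aux

variable (A B : Type) [CommRing A] [CommRing B] [Algebra A B]

lemma rmap_tprod {m n : ℕ} (r : Fin m → Fin n) (y : Fin m → B) :
    rmap A B r (tprod A y) = ∏ k : Fin m,
      PiTensorProduct.singleAlgHom (R := A) (A := fun _ : Fin n => B) (r k) (y k) := by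
  simp only [rmap]
  erw [PiTensorProduct.liftAlgHom_apply]
  simp

lemma single_eq_tprod {n : ℕ} (k : Fin n) (y : B) :
    PiTensorProduct.singleAlgHom (R := A) (A := fun _ : Fin n => B) k y
      = tprod A (Function.update (fun _ => (1:B)) k y) := by
  simp [PiTensorProduct.singleAlgHom_apply]
  rfl

lemma prod_single {m : ℕ} (s : Finset (Fin m)) (g : Fin m → B) :
    ∏ k ∈ s, PiTensorProduct.singleAlgHom (R := A) (A := fun _ : Fin m => B) k (g k)
      = tprod A (fun l => if l ∈ s then g l else 1) := by
  induction s using Finset.induction_on with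
  | empty => simp only [Finset.prod_empty, Finset.notMem_empty, if_false]; rfl
  | @insert a s ha ih =>
      rw [Finset.prod_insert ha, ih, single_eq_tprod, PiTensorProduct.tprod_mul_tprod]
      congr 1
      funext l
      by_cases h : l = a
      · subst h; simp [ha]
      · simp only [Pi.mul_apply, Function.update_of_ne h]
        by_cases hs : l ∈ s <;> simp [hs, h]

lemma rmap_single {m n : ℕ} (r : Fin m → Fin n) (k : Fin m) (y : B) :
    rmap A B r (PiTensorProduct.singleAlgHom (R := A) (A := fun _ : Fin m => B) k y)
      = PiTensorProduct.singleAlgHom (R := A) (A := fun _ : Fin n => B) (r k) y := by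
  rw [single_eq_tprod, rmap_tprod]
  rw [Finset.prod_eq_single k]
  · simp
  · intro b _ hb; rw [Function.update_of_ne hb]; exact map_one _
  · simp

lemma rmap_comp {m n p : ℕ} (r : Fin m → Fin n) (r' : Fin n → Fin p) :
    (rmap A B r').comp (rmap A B r) = rmap A B (r' ∘ r) := by
  apply PiTensorProduct.algHom_ext
  intro k
  apply AlgHom.ext
  intro x
  show rmap A B r' (rmap A B r
      (PiTensorProduct.singleAlgHom (R := A) (A := fun _ : Fin m => B) k x))
    = rmap A B (r' ∘ r) (PiTensorProduct.singleAlgHom (R := A) (A := fun _ : Fin m => B) k x)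
  rw [rmap_single, rmap_single, rmap_single]
  rfl

lemma tprod_mul_single {m : ℕ} (t : Fin m → B) (k : Fin m) (y : B) :
    (tprod A t : Bpow A B m) * PiTensorProduct.singleAlgHom (R := A) (A := fun _ : Fin m => B) k y
      = tprod A (Function.update t k (t k * y)) := by
  rw [single_eq_tprod, PiTensorProduct.tprod_mul_tprod]
  congr 1
  funext l
  by_cases h : l = k
  · subst h; simp
  · simp [Function.update_of_ne h, h]

section span
variable (n i j : ℕ) (hij : i < j) (hj : j ≤ n)

/-- the composite map `σ ∘ merge` -/
def cfun : Fin (n+1) → Fin (n+1) := fun k =>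
  if _ : k.val = j then ⟨i, by omega⟩ else k

lemma tau_tprod_sub (y : Fin (n+1) → B) :
    (tprod A y : Bpow A B (n+1)) - rmap A B (cfun n i j hij hj) (tprod A y)
      = dElt A B n i j (by omega) (by omega) (y ⟨j, by omega⟩)
          * tprod A (Function.update y ⟨j, by omega⟩ 1) := by
  set jf : Fin (n+1) := ⟨j, by omega⟩
  have key : ∀ c' : Fin (n+1) → Fin (n+1), (∀ k, k ≠ jf → c' k = k) →
      (∏ k : Fin (n+1), PiTensorProduct.singleAlgHom (R := A)
          (A := fun _ : Fin (n+1) => B) (c' k) (y k))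
        = PiTensorProduct.singleAlgHom (R := A) (A := fun _ : Fin (n+1) => B) (c' jf) (y jf)
            * tprod A (Function.update y jf 1) := by
    intro c' hc'
    rw [← Finset.mul_prod_erase Finset.univ _ (Finset.mem_univ jf)]
    congr 1
    rw [Finset.prod_congr rfl (fun k hk => by
      rw [hc' k (Finset.ne_of_mem_erase hk)])]
    rw [prod_single]
    congr 1
    funext l
    by_cases h : l = jf
    · subst h; simp
    · simp [Finset.mem_erase, h, Function.update_of_ne h]
  have h1 : (tprod A y : Bpow A B (n+1))
      = PiTensorProduct.singleAlgHom (R := A) (A := fun _ : Fin (n+1) => B) jf (y jf)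
          * tprod A (Function.update y jf 1) := by
    have hall : (tprod A y : Bpow A B (n+1)) = ∏ k : Fin (n+1),
        PiTensorProduct.singleAlgHom (R := A) (A := fun _ : Fin (n+1) => B) k (y k) := by
      rw [prod_single]; congr 1; funext l; simp
    exact hall.trans (key (fun k => k) (fun k _ => rfl))
  have h2 := key (cfun n i j hij hj) (fun k hk => by
    simp only [cfun]
    rw [dif_neg]
    intro h; exact hk (Fin.ext h))
  rw [rmap_tprod, h2, h1]
  have hcj : cfun n i j hij hj jf = ⟨i, by omega⟩ := by simp [cfun, jf]
  rw [hcj, dElt, sub_mul]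

lemma ker_le_span :
    Iideal A B n i j hij hj ≤ Ideal.span (Set.range (dElt A B n i j (by omega) (by omega))) := by
  intro z hz
  have hτ : ∀ x : Bpow A B (n+1),
      x - rmap A B (cfun n i j hij hj) x
        ∈ Ideal.span (Set.range (dElt A B n i j (by omega) (by omega))) := by
    intro x
    induction x using PiTensorProduct.induction_on with
    | smul_tprod r y =>
        rw [map_smul, ← smul_sub]
        exact Submodule.smul_of_tower_mem _ r (by
          rw [tau_tprod_sub A B n i j hij hj y]
          exact Ideal.mul_mem_right _ _ (Ideal.subset_span ⟨_, rfl⟩))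
    | add u v hu hv =>
        have : u + v - rmap A B (cfun n i j hij hj) (u + v)
            = (u - rmap A B (cfun n i j hij hj) u) + (v - rmap A B (cfun n i j hij hj) v) := by
          rw [map_add]; ring
        rw [this]; exact Submodule.add_mem _ hu hv
  have hfac : rmap A B (cfun n i j hij hj) z = 0 := by
    have hcomp : (rmap A B (fun k : Fin n => if _ : k.val < j then (⟨k.val, by omega⟩ : Fin (n+1))
          else ⟨k.val + 1, by have := k.isLt; omega⟩)).comp (mergeN A B n i j hij hj)
        = rmap A B (cfun n i j hij hj) := by
      rw [mergeN, rmap_comp]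
      congr 1
      funext k
      simp only [Function.comp_apply, cfun]
      have := k.isLt
      rcases Nat.lt_trichotomy (k:ℕ) j with h | h | h
      · rw [dif_pos h]
        simp only [Fin.val_mk]
        rw [dif_pos h, dif_neg (by omega : ¬(k:ℕ) = j)]
      · rw [dif_neg (by omega : ¬(k:ℕ) < j), dif_pos h]
        simp only [Fin.val_mk]
        rw [dif_pos (by omega : i < j), dif_pos h]
      · rw [dif_neg (by omega : ¬(k:ℕ) < j), dif_neg (by omega : ¬(k:ℕ) = j)]
        simp only [Fin.val_mk]
        rw [dif_neg (by omega : ¬((k:ℕ) - 1 < j)), dif_neg (by omega : ¬(k:ℕ) = j)]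
        exact Fin.ext (by simp only [Fin.val_mk]; omega)
    have hz0 : mergeN A B n i j hij hj z = 0 := hz
    rw [← hcomp]
    simp [hz0]
  have := hτ z
  rwa [hfac, sub_zero] at this
end span

section swap
variable {n : ℕ}

lemma adjQ (f : Fin n → Ω[B⁄A]) (p : Fin n) (hp : p.val + 1 < n) (ω τ : Ω[B⁄A]) :
    (Submodule.Quotient.mk (p := symSub A B n)
        (tprod B (Function.update (Function.update f p ω) ⟨p.val+1, hp⟩ τ)) : ASym A B n)
      = - Submodule.Quotient.mk
          (tprod B (Function.update (Function.update f p τ) ⟨p.val+1, hp⟩ ω)) := by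
  rw [eq_neg_iff_add_eq_zero, ← Submodule.Quotient.mk_add, Submodule.Quotient.mk_eq_zero]
  exact Submodule.subset_span ⟨f, p, hp, ω, τ, rfl⟩

lemma swapQ (d : ℕ) : ∀ (p q : Fin n), (p:ℕ) + 1 + d = (q:ℕ) →
    ∀ (f : Fin n → Ω[B⁄A]) (ω τ : Ω[B⁄A]),
    (Submodule.Quotient.mk (p := symSub A B n)
        (tprod B (Function.update (Function.update f p ω) q τ)) : ASym A B n)
      = - Submodule.Quotient.mk
          (tprod B (Function.update (Function.update f p τ) q ω)) := by
  induction d with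
  | zero =>
      intro p q h f ω τ
      have hp : (p:ℕ) + 1 < n := by have := q.isLt; omega
      have hq : q = ⟨(p:ℕ)+1, hp⟩ := Fin.ext (by simpa using h.symm)
      subst hq
      exact adjQ A B f p hp ω τ
  | succ d ih =>
      intro p q h f ω τ
      have hpn : (p:ℕ) + 1 < n := by have := q.isLt; omega
      set r : Fin n := ⟨(p:ℕ) + 1, hpn⟩ with hr
      have hpq : p ≠ q := by intro e; rw [e] at h; omega
      have hpr : p ≠ r := by intro e; rw [hr] at e; have := congrArg Fin.val e; simp at this
      have hrq : r ≠ q := by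
        intro e; have := congrArg Fin.val e; rw [hr] at this; simp at this; omega
      have hval1 : (Function.update (Function.update f q τ) p ω) r = f r := by
        rw [Function.update_of_ne (Ne.symm hpr), Function.update_of_ne hrq]
      have e1 : Function.update (Function.update f p ω) q τ
          = Function.update (Function.update (Function.update f q τ) p ω) r
              ((Function.update (Function.update f q τ) p ω) r) := by
        rw [hval1]
        funext x
        simp only [Function.update_apply]
        split_ifs <;> (try rfl) <;> simp_all
      rw [e1, hval1]
      rw [adjQ A B (Function.update f q τ) p hpn ω (f r)]
      have e2 : Function.update (Function.update (Function.update f q τ) p (f r)) r ω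
          = Function.update (Function.update (Function.update f p (f r)) r ω) q τ := by
        funext x
        simp only [Function.update_apply]
        split_ifs <;> (try rfl) <;> simp_all
      rw [e2]
      rw [ih r q (by rw [hr]; simp; omega) (Function.update f p (f r)) ω τ]
      have e3 : Function.update (Function.update (Function.update f p (f r)) r τ) q ω
          = Function.update (Function.update (Function.update f q ω) p (f r)) r τ := by
        funext x
        simp only [Function.update_apply]
        split_ifs <;> (try rfl) <;> simp_all
      rw [e3]
      rw [adjQ A B (Function.update f q ω) p hpn (f r) τ]
      have e4 : Function.update (Function.update (Function.update f q ω) p τ) r (f r)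
          = Function.update (Function.update f p τ) q ω := by
        funext x
        simp only [Function.update_apply]
        split_ifs <;> (try rfl) <;> simp_all
      rw [e4, neg_neg]
end swap

lemma dfun_update (n : ℕ) (s : Fin (n+1) → B) (v : ℕ) (hv1 : 1 ≤ v) (hv2 : v < n+1) (a : B) :
    (fun m : Fin n => KaehlerDifferential.D A B (Function.update s ⟨v, hv2⟩ a m.succ))
      = Function.update (fun m : Fin n => KaehlerDifferential.D A B (s m.succ))
          ⟨v-1, by omega⟩ (KaehlerDifferential.D A B a) := by
  funext m
  by_cases h : m = ⟨v-1, by omega⟩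
  · subst h
    rw [Function.update_self]
    have hs : ((⟨v-1, by omega⟩ : Fin n)).succ = (⟨v, hv2⟩ : Fin (n+1)) :=
      Fin.ext (by simp [Fin.val_succ]; omega)
    rw [hs, Function.update_self]
  · rw [Function.update_of_ne h, Function.update_of_ne]
    intro e
    apply h
    apply Fin.ext
    have := congrArg Fin.val e
    simp only [Fin.val_succ, Fin.val_mk] at this ⊢
    omega

lemma dfun_update_zero (n : ℕ) (s : Fin (n+1) → B) (h0 : (0:ℕ) < n+1) (a : B) :
    (fun m : Fin n => KaehlerDifferential.D A B (Function.update s ⟨0, h0⟩ a m.succ))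
      = fun m => KaehlerDifferential.D A B (s m.succ) := by
  funext m
  rw [Function.update_of_ne]
  intro e
  have := congrArg Fin.val e
  simp [Fin.val_succ] at this

lemma expand_slot {n : ℕ} (g : Fin n → Ω[B⁄A]) (p : Fin n) (b c : B) :
    (tprod B (Function.update g p (KaehlerDifferential.D A B (b * c)))
        : ⨂[B] (_ : Fin n), Ω[B⁄A])
      = b • tprod B (Function.update g p (KaehlerDifferential.D A B c))
        + c • tprod B (Function.update g p (KaehlerDifferential.D A B b)) := by
  rw [Derivation.leibniz, MultilinearMap.map_update_add, MultilinearMap.map_update_smul,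
    MultilinearMap.map_update_smul]

lemma expand_inner {n : ℕ} (g : Fin n → Ω[B⁄A]) (p q : Fin n) (hpq : p ≠ q) (β : Ω[B⁄A])
    (b c : B) :
    (tprod B (Function.update (Function.update g p (KaehlerDifferential.D A B (b * c))) q β)
        : ⨂[B] (_ : Fin n), Ω[B⁄A])
      = b • tprod B (Function.update (Function.update g p (KaehlerDifferential.D A B c)) q β)
        + c • tprod B (Function.update (Function.update g p (KaehlerDifferential.D A B b)) q β) := by
  rw [Function.update_comm hpq, expand_slot, Function.update_comm (Ne.symm hpq),
    Function.update_comm (Ne.symm hpq)]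

lemma core (n i j : ℕ) (hij : i < j) (hj : j ≤ n)
    (Ψ : Bpow A B (n+1) →ₗ[A] ASym A B n)
    (hΨ : ∀ y : Fin (n+1) → B,
      Ψ (PiTensorProduct.tprod A y) = Submodule.Quotient.mk
        (y 0 • PiTensorProduct.tprod B
          (fun i : Fin n => KaehlerDifferential.D A B (y i.succ))))
    (t : Fin (n+1) → B) (y y' : B) :
    Ψ (tprod A t * dElt A B n i j (by omega) hj y * dElt A B n i j (by omega) hj y') = 0 := by
  classical
  have hjlt : j < n + 1 := by omega
  have hilt : i < n + 1 := by omega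
  have hne : (⟨i, hilt⟩ : Fin (n+1)) ≠ ⟨j, hjlt⟩ := by
    intro e; have := congrArg Fin.val e; simp at this; omega
  have hprod : tprod A t * dElt A B n i j (by omega) hj y * dElt A B n i j (by omega) hj y'
      = tprod A (Function.update t ⟨j,hjlt⟩ (t ⟨j,hjlt⟩ * y * y'))
        - tprod A (Function.update (Function.update t ⟨j,hjlt⟩ (t ⟨j,hjlt⟩ * y)) ⟨i,hilt⟩
            (t ⟨i,hilt⟩ * y'))
        - tprod A (Function.update (Function.update t ⟨i,hilt⟩ (t ⟨i,hilt⟩ * y)) ⟨j,hjlt⟩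
            (t ⟨j,hjlt⟩ * y'))
        + tprod A (Function.update t ⟨i,hilt⟩ (t ⟨i,hilt⟩ * y * y')) := by
    unfold dElt
    rw [mul_sub (tprod A t), tprod_mul_single, tprod_mul_single, sub_mul, mul_sub, mul_sub,
      tprod_mul_single, tprod_mul_single, tprod_mul_single, tprod_mul_single]
    simp only [Function.update_self, Function.update_idem, Function.update_of_ne hne,
      Function.update_of_ne (Ne.symm hne)]
    ring
  rw [hprod, map_add, map_sub, map_sub, hΨ, hΨ, hΨ, hΨ]
  have h0j : (0 : Fin (n+1)) ≠ ⟨j, hjlt⟩ := by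
    intro e; have := congrArg Fin.val e; simp at this; omega
  have h1j : (1:ℕ) ≤ j := by omega
  by_cases hi0 : i = 0
  · subst hi0
    have h00 : (⟨0, hilt⟩ : Fin (n+1)) = 0 := Fin.ext (by simp)
    rw [dfun_update A B n t j h1j hjlt (t ⟨j,hjlt⟩ * y * y'),
      dfun_update_zero A B n (Function.update t ⟨j,hjlt⟩ (t ⟨j,hjlt⟩ * y)) hilt
        (t ⟨0,hilt⟩ * y'),
      dfun_update A B n t j h1j hjlt (t ⟨j,hjlt⟩ * y),
      dfun_update A B n (Function.update t ⟨0,hilt⟩ (t ⟨0,hilt⟩ * y)) j h1j hjlt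
        (t ⟨j,hjlt⟩ * y'),
      dfun_update_zero A B n t hilt (t ⟨0,hilt⟩ * y),
      dfun_update_zero A B n t hilt (t ⟨0,hilt⟩ * y * y')]
    rw [h00]
    simp only [Function.update_of_ne h0j, Function.update_self]
    have pj : j - 1 < n := by omega
    set df : Fin n → Ω[B⁄A] := fun m => KaehlerDifferential.D A B (t m.succ) with hdfdef
    have hsj : ((⟨j-1, pj⟩ : Fin n)).succ = (⟨j, hjlt⟩ : Fin (n+1)) :=
      Fin.ext (by simp [Fin.val_succ]; omega)
    have habsj : Function.update df ⟨j-1, pj⟩ (KaehlerDifferential.D A B (t ⟨j, hjlt⟩)) = df := by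
      funext m
      by_cases h : m = ⟨j-1, pj⟩
      · subst h; rw [Function.update_self, hdfdef]; simp only []; rw [hsj]
      · rw [Function.update_of_ne h]
    rw [← Submodule.Quotient.mk_sub, ← Submodule.Quotient.mk_sub, ← Submodule.Quotient.mk_add,
      Submodule.Quotient.mk_eq_zero]
    have hval : t 0 • ((PiTensorProduct.tprod B) (Function.update df ⟨j-1, pj⟩
          (KaehlerDifferential.D A B (t ⟨j, hjlt⟩ * y * y'))))
        - (t 0 * y') • ((PiTensorProduct.tprod B) (Function.update df ⟨j-1, pj⟩
            (KaehlerDifferential.D A B (t ⟨j, hjlt⟩ * y))))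
        - (t 0 * y) • ((PiTensorProduct.tprod B) (Function.update df ⟨j-1, pj⟩
            (KaehlerDifferential.D A B (t ⟨j, hjlt⟩ * y'))))
        + (t 0 * y * y') • ((PiTensorProduct.tprod B) df)
        = 0 := by
      simp only [expand_slot, habsj]
      module
    rw [hval]
    exact Submodule.zero_mem _
  · -- case 1 ≤ i
    have h1i : (1:ℕ) ≤ i := by omega
    have h1j : (1:ℕ) ≤ j := by omega
    have h0i : (0 : Fin (n+1)) ≠ ⟨i, hilt⟩ := by
      intro e; have := congrArg Fin.val e; simp at this; omega
    rw [dfun_update A B n t j h1j hjlt (t ⟨j,hjlt⟩ * y * y'),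
      dfun_update A B n (Function.update t ⟨j,hjlt⟩ (t ⟨j,hjlt⟩ * y)) i h1i hilt
        (t ⟨i,hilt⟩ * y'),
      dfun_update A B n t j h1j hjlt (t ⟨j,hjlt⟩ * y),
      dfun_update A B n (Function.update t ⟨i,hilt⟩ (t ⟨i,hilt⟩ * y)) j h1j hjlt
        (t ⟨j,hjlt⟩ * y'),
      dfun_update A B n t i h1i hilt (t ⟨i,hilt⟩ * y),
      dfun_update A B n t i h1i hilt (t ⟨i,hilt⟩ * y * y')]
    simp only [Function.update_of_ne h0j, Function.update_of_ne h0i]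
    have pj : j - 1 < n := by omega
    have pi' : i - 1 < n := by omega
    set df : Fin n → Ω[B⁄A] := fun m => KaehlerDifferential.D A B (t m.succ) with hdfdef
    have hnej : (⟨j-1, pj⟩ : Fin n) ≠ ⟨i-1, pi'⟩ := by
      intro e; have := congrArg Fin.val e; simp at this; omega
    have hsj : ((⟨j-1, pj⟩ : Fin n)).succ = (⟨j, hjlt⟩ : Fin (n+1)) :=
      Fin.ext (by simp [Fin.val_succ]; omega)
    have hsi : ((⟨i-1, pi'⟩ : Fin n)).succ = (⟨i, hilt⟩ : Fin (n+1)) :=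
      Fin.ext (by simp [Fin.val_succ]; omega)
    have habsj : Function.update df ⟨j-1, pj⟩ (KaehlerDifferential.D A B (t ⟨j, hjlt⟩)) = df := by
      funext m
      by_cases h : m = ⟨j-1, pj⟩
      · subst h; rw [Function.update_self, hdfdef]; simp only []; rw [hsj]
      · rw [Function.update_of_ne h]
    have habsi : Function.update df ⟨i-1, pi'⟩ (KaehlerDifferential.D A B (t ⟨i, hilt⟩)) = df := by
      funext m
      by_cases h : m = ⟨i-1, pi'⟩
      · subst h; rw [Function.update_self, hdfdef]; simp only []; rw [hsi]
      · rw [Function.update_of_ne h]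
    have habs2 : ∀ β : Ω[B⁄A],
        Function.update (Function.update df ⟨i-1, pi'⟩ β) ⟨j-1, pj⟩
            (KaehlerDifferential.D A B (t ⟨j, hjlt⟩))
          = Function.update df ⟨i-1, pi'⟩ β := by
      intro β
      funext m
      by_cases h : m = ⟨j-1, pj⟩
      · subst h
        rw [Function.update_self, Function.update_of_ne hnej, hdfdef]
        simp only []; rw [hsj]
      · rw [Function.update_of_ne h]
    have horient : ∀ α β : Ω[B⁄A],
        Function.update (Function.update df ⟨j-1, pj⟩ α) ⟨i-1, pi'⟩ β
          = Function.update (Function.update df ⟨i-1, pi'⟩ β) ⟨j-1, pj⟩ α :=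
      fun α β => Function.update_comm hnej α β df
    have hEinn : ∀ (β : Ω[B⁄A]) (b c : B),
        (PiTensorProduct.tprod B (Function.update (Function.update df ⟨i-1, pi'⟩
              (KaehlerDifferential.D A B (b * c))) ⟨j-1, pj⟩ β)
            : ⨂[B] (_ : Fin n), Ω[B⁄A])
          = b • PiTensorProduct.tprod B (Function.update (Function.update df ⟨i-1, pi'⟩
              (KaehlerDifferential.D A B c)) ⟨j-1, pj⟩ β)
            + c • PiTensorProduct.tprod B (Function.update (Function.update df ⟨i-1, pi'⟩
              (KaehlerDifferential.D A B b)) ⟨j-1, pj⟩ β) :=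
      fun β b c => expand_inner A B df ⟨i-1, pi'⟩ ⟨j-1, pj⟩ (Ne.symm hnej) β b c
    rw [horient]
    rw [← Submodule.Quotient.mk_sub, ← Submodule.Quotient.mk_sub, ← Submodule.Quotient.mk_add]
    set Z12 : ⨂[B] (_ : Fin n), Ω[B⁄A] := PiTensorProduct.tprod B (Function.update (Function.update df ⟨i-1, pi'⟩
        (KaehlerDifferential.D A B y')) ⟨j-1, pj⟩ (KaehlerDifferential.D A B y)) with hZ12
    set Z21 : ⨂[B] (_ : Fin n), Ω[B⁄A] := PiTensorProduct.tprod B (Function.update (Function.update df ⟨i-1, pi'⟩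
        (KaehlerDifferential.D A B y)) ⟨j-1, pj⟩ (KaehlerDifferential.D A B y')) with hZ21
    have hval : t 0 • ((PiTensorProduct.tprod B) (Function.update df ⟨j-1, pj⟩
          (KaehlerDifferential.D A B (t ⟨j, hjlt⟩ * y * y'))))
        - t 0 • ((PiTensorProduct.tprod B) (Function.update (Function.update df ⟨i-1, pi'⟩
            (KaehlerDifferential.D A B (t ⟨i, hilt⟩ * y'))) ⟨j-1, pj⟩
            (KaehlerDifferential.D A B (t ⟨j, hjlt⟩ * y))))
        - t 0 • ((PiTensorProduct.tprod B) (Function.update (Function.update df ⟨i-1, pi'⟩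
            (KaehlerDifferential.D A B (t ⟨i, hilt⟩ * y))) ⟨j-1, pj⟩
            (KaehlerDifferential.D A B (t ⟨j, hjlt⟩ * y'))))
        + t 0 • ((PiTensorProduct.tprod B) (Function.update df ⟨i-1, pi'⟩
            (KaehlerDifferential.D A B (t ⟨i, hilt⟩ * y * y'))))
        = -((t 0 * (t ⟨i, hilt⟩ * t ⟨j, hjlt⟩)) • (Z12 + Z21)) := by
      simp only [expand_slot, hEinn, habsj, habsi, habs2, hZ12, hZ21]
      module
    rw [hval]
    rw [Submodule.Quotient.mk_eq_zero]
    apply Submodule.neg_mem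
    apply Submodule.smul_mem
    have hswap := swapQ A B (d := j - i - 1) ⟨i-1, pi'⟩ ⟨j-1, pj⟩ (by simp; omega) df
      (KaehlerDifferential.D A B y') (KaehlerDifferential.D A B y)
    have : (Submodule.Quotient.mk (Z12 + Z21) : ASym A B n) = 0 := by
      rw [Submodule.Quotient.mk_add, hZ12, hZ21, hswap]
      abel
    exact (Submodule.Quotient.mk_eq_zero _).mp this


end Statement10Aux

/-- The canonical map `Ψₙ : B^{⊗(n+1)} → Ω^{(n)}_{B/A}` annihilates
`I_{ij}²` for every `0 ≤ i < j ≤ n`. -/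
theorem statement10 (n i j : ℕ) (hij : i < j) (hj : j ≤ n)
    (Ψ : Bpow A B (n+1) →ₗ[A] ASym A B n)
    (hΨ : ∀ y : Fin (n+1) → B,
      Ψ (PiTensorProduct.tprod A y) = Submodule.Quotient.mk
        (y 0 • PiTensorProduct.tprod B
          (fun i : Fin n => KaehlerDifferential.D A B (y i.succ)))) :
    ∀ z ∈ (Iideal A B n i j hij hj) ^ 2, Ψ z = 0 := by
  intro z hz
  classical
  set R : Set (Bpow A B (n+1)) :=
    Set.range (dElt A B n i j (by omega) (by omega)) with hR
  have hIle : Iideal A B n i j hij hj ≤ Ideal.span R :=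
    Statement10Aux.ker_le_span A B n i j hij hj
  have hzz : z ∈ Ideal.span (R * R) := by
    rw [← Ideal.span_mul_span']
    rw [pow_two] at hz
    exact Ideal.mul_mono hIle hIle hz
  have hmul : ∀ c : Bpow A B (n+1), ∀ u v : B,
      Ψ (c * (dElt A B n i j (by omega) (by omega) u
        * dElt A B n i j (by omega) (by omega) v)) = 0 := by
    intro c u v
    induction c using PiTensorProduct.induction_on with
    | smul_tprod r s =>
        rw [smul_mul_assoc, map_smul, ← mul_assoc]
        rw [Statement10Aux.core A B n i j hij hj Ψ hΨ s u v]
        simp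
    | add a b ha hb =>
        rw [add_mul, map_add, ha, hb, add_zero]
  have key : ∀ x ∈ Ideal.span (R * R), ∀ c : Bpow A B (n+1), Ψ (c * x) = 0 := by
    intro x hx
    induction hx using Submodule.span_induction with
    | mem w hw =>
        obtain ⟨a, ha, b, hb, rfl⟩ := hw
        obtain ⟨u, rfl⟩ := ha
        obtain ⟨v, rfl⟩ := hb
        intro c
        exact hmul c u v
    | zero => intro c; simp
    | add a b _ _ ha hb => intro c; rw [mul_add, map_add, ha c, hb c, add_zero]
    | smul r x _ hx => intro c; rw [smul_eq_mul, ← mul_assoc, hx (c * r)]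
  have := key z hzz 1
  rwa [one_mul] at this
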